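/- For every continuously differentiable function f : [0,1] → ℝ and every ε > 0, there exist m ∈ ℕ and parameters w_j, b_j, λ_j ∈ ℝ (j = 1,…,m) such that (∫₀¹ (f(x) − Σ_{j=1}^{m} λ_j · max(0, w_j·x + b_j))² dx)^{1/2} < ε. That is, two-layer ReLU networks approximate every C¹ function on [0,1] to any desired accuracy in the L² distance. -/

import Mathlib

open Set Finset

lemma relu_eq_aux (x u : ℝ) : max 0 (x - u) = x - min x u := by
  rcases le_total x u with h | h
  · rw [min_eq_left h, max_eq_left (by linarith), sub_self]
  · rw [min_eq_right h, max_eq_right (by linarith)]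

theorem two_layer_relu_approximates_C1_univariate
    (f : ℝ → ℝ) (hf : ContDiffOn ℝ 1 f (Icc 0 1)) (ε : ℝ) (hε : 0 < ε) :
    ∃ (m : ℕ) (w b lam : Fin m → ℝ),
      Real.sqrt (∫ x in (0:ℝ)..1,
        (f x - ∑ j, lam j * max 0 (w j * x + b j)) ^ 2) < ε := by
  -- Lipschitz bound
  obtain ⟨C, hC⟩ : ∃ C : ℝ, ∀ a ∈ Icc (0:ℝ) 1, ∀ b ∈ Icc (0:ℝ) 1,
      |f b - f a| ≤ C * |b - a| := by
    have hd : DifferentiableOn ℝ f (Icc 0 1) := hf.differentiableOn one_ne_zero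
    have hc : ContinuousOn (derivWithin f (Icc 0 1)) (Icc 0 1) :=
      hf.continuousOn_derivWithin (uniqueDiffOn_Icc one_pos) le_rfl
    obtain ⟨C, hC⟩ := isCompact_Icc.exists_bound_of_continuousOn hc
    exact ⟨C, fun a ha b hb => by
      simpa using Convex.norm_image_sub_le_of_norm_derivWithin_le hd hC (convex_Icc 0 1) ha hb⟩
  set M : ℝ := max C 0 with hM
  have hM0 : 0 ≤ M := le_max_right _ _
  have hLip : ∀ a ∈ Icc (0:ℝ) 1, ∀ b ∈ Icc (0:ℝ) 1, |f b - f a| ≤ M * |b - a| := by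
    intro a ha b hb
    calc |f b - f a| ≤ C * |b - a| := hC a ha b hb
    _ ≤ M * |b - a| := mul_le_mul_of_nonneg_right (le_max_left _ _) (abs_nonneg _)
  set n : ℕ := ⌈(2 * M) / ε⌉₊ + 1 with hn
  have hn0 : 0 < n := Nat.succ_pos _
  have hnR : (0:ℝ) < n := Nat.cast_pos.mpr hn0
  have hδε : 2 * M / n < ε := by
    rw [div_lt_iff₀ hnR]
    have h1 : (2 * M) / ε ≤ (⌈(2 * M) / ε⌉₊ : ℝ) := Nat.le_ceil _
    have h2 : ((⌈(2 * M) / ε⌉₊ : ℝ)) < n := by rw [hn]; push_cast; linarith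
    have h3 : (2 * M) / ε < n := lt_of_le_of_lt h1 h2
    have h4 : (2 * M / ε) * ε < n * ε := mul_lt_mul_of_pos_right h3 hε
    have h5 : (2 * M / ε) * ε = 2 * M := by field_simp
    linarith
  set δ : ℝ := 2 * M / n with hδ
  have hδ0 : 0 ≤ δ := by positivity
  -- nodes and slopes
  set t : ℕ → ℝ := fun k => (k : ℝ) / n with ht
  set s : ℕ → ℝ := fun k => n * (f (t (k + 1)) - f (t k)) with hs
  set N : ℝ → ℝ := fun x =>
    f 0 + ∑ k ∈ range n, s k * (max 0 (x - t k) - max 0 (x - t (k + 1))) with hN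
  have htmono : ∀ k : ℕ, t k ≤ t (k + 1) := by
    intro k
    simp only [ht]
    gcongr
    push_cast
    linarith
  have htmem : ∀ k : ℕ, k ≤ n → t k ∈ Icc (0:ℝ) 1 := by
    intro k hk
    refine ⟨by positivity, ?_⟩
    rw [ht]
    rw [div_le_one hnR]
    exact_mod_cast hk
  have htstep : ∀ k : ℕ, t (k + 1) - t k = 1 / n := by
    intro k
    rw [ht]
    push_cast
    field_simp
    ring
  -- pointwise bound
  have key : ∀ x ∈ Icc (0:ℝ) 1, |f x - N x| ≤ δ := by
    intro x hx
    obtain ⟨hx0, hx1⟩ := hx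
    have hminmem : ∀ k : ℕ, min x (t k) ∈ Icc (0:ℝ) 1 :=
      fun k => ⟨le_min hx0 (by positivity), le_trans (min_le_left _ _) hx1⟩
    have htn : t n = 1 := div_self (ne_of_gt hnR)
    have ht0 : t 0 = 0 := by simp [ht]
    have htel : f x - f 0 = ∑ k ∈ range n, (f (min x (t (k + 1))) - f (min x (t k))) := by
      rw [Finset.sum_range_sub (fun k => f (min x (t k))), htn, ht0,
        min_eq_left hx1, min_eq_right hx0]
    have hNx : f x - N x = ∑ k ∈ range n,
        ((f (min x (t (k + 1))) - f (min x (t k)))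
          - s k * (min x (t (k + 1)) - min x (t k))) := by
      have hmm : ∀ k, max 0 (x - t k) - max 0 (x - t (k + 1))
          = min x (t (k + 1)) - min x (t k) := by
        intro k; rw [relu_eq_aux, relu_eq_aux]; ring
      simp only [hN, hmm]
      rw [Finset.sum_sub_distrib, ← htel]
      ring
    set k₀ : ℕ := min (⌊(n : ℝ) * x⌋₊) (n - 1) with hk₀
    have hk₀n : k₀ ∈ range n := by rw [Finset.mem_range]; omega
    have hT0 : ∀ k ∈ range n, k ≠ k₀ →
        (f (min x (t (k + 1))) - f (min x (t k)))
          - s k * (min x (t (k + 1)) - min x (t k)) = 0 := by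
      intro k hk hne
      have hkn := Finset.mem_range.mp hk
      have hcase : x ≤ t k ∨ t (k + 1) ≤ x := by
        rcases lt_or_gt_of_ne hne with h | h
        · right
          have h1 : (k + 1 : ℕ) ≤ ⌊(n : ℝ) * x⌋₊ := by omega
          have h2 : ((k : ℝ) + 1) ≤ n * x := by
            have hfl := Nat.floor_le (by positivity : (0:ℝ) ≤ (n : ℝ) * x)
            calc ((k:ℝ) + 1) = ((k + 1 : ℕ) : ℝ) := by push_cast; ring
            _ ≤ (⌊(n : ℝ) * x⌋₊ : ℝ) := by exact_mod_cast h1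
            _ ≤ n * x := hfl
          rw [ht, div_le_iff₀ hnR, Nat.cast_add, Nat.cast_one]
          linarith
        · left
          by_cases hcmp : ⌊(n : ℝ) * x⌋₊ ≤ n - 1
          · have h2 : ⌊(n : ℝ) * x⌋₊ + 1 ≤ k := by omega
            have h1 : (n : ℝ) * x < (⌊(n : ℝ) * x⌋₊ : ℝ) + 1 := Nat.lt_floor_add_one _
            have h3 : ((⌊(n : ℝ) * x⌋₊ : ℝ) + 1) ≤ k := by exact_mod_cast h2
            rw [ht, le_div_iff₀ hnR]
            linarith
          · exfalso; omega
      rcases hcase with h | h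
      · have ha : min x (t k) = x := min_eq_left h
        have hb : min x (t (k + 1)) = x := min_eq_left (le_trans h (htmono k))
        rw [ha, hb]; ring
      · have ha : min x (t k) = t k := min_eq_right (le_trans (htmono k) h)
        have hb : min x (t (k + 1)) = t (k + 1) := min_eq_right h
        rw [ha, hb, hs]
        have := htstep k
        have hne' : (n : ℝ) ≠ 0 := ne_of_gt hnR
        rw [this]
        field_simp
        ring
    rw [hNx, Finset.sum_eq_single_of_mem k₀ hk₀n hT0]
    have hk₀lt : k₀ < n := Finset.mem_range.mp hk₀n
    set a : ℝ := min x (t k₀) with ha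
    set b : ℝ := min x (t (k₀ + 1)) with hb
    have hab : a ≤ b := min_le_min le_rfl (htmono k₀)
    have hba : b - a ≤ 1 / n := by
      rcases le_total x (t k₀) with h | h
      · have h1 : a = x := min_eq_left h
        have h2 : b = x := min_eq_left (le_trans h (htmono k₀))
        rw [h1, h2]; simp only [sub_self]; positivity
      · have h1 : a = t k₀ := min_eq_right h
        have h2 : b ≤ t (k₀ + 1) := min_le_right _ _
        have := htstep k₀
        linarith
    have hfab : |f b - f a| ≤ M * (1 / n) := by
      calc |f b - f a| ≤ M * |b - a| := hLip a (hminmem _) b (hminmem _)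
      _ ≤ M * (1 / n) := by
          apply mul_le_mul_of_nonneg_left _ hM0
          rw [abs_of_nonneg (by linarith)]; exact hba
    have hsk : |s k₀| ≤ M := by
      rw [hs, abs_mul, abs_of_nonneg (le_of_lt hnR)]
      have h1 : |f (t (k₀ + 1)) - f (t k₀)| ≤ M * (1 / n) := by
        calc |f (t (k₀ + 1)) - f (t k₀)|
            ≤ M * |t (k₀ + 1) - t k₀| := hLip _ (htmem _ (by omega)) _ (htmem _ (by omega))
        _ = M * (1 / n) := by rw [htstep, abs_of_nonneg (by positivity)]
      calc (n : ℝ) * |f (t (k₀ + 1)) - f (t k₀)| ≤ n * (M * (1 / n)) :=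
        mul_le_mul_of_nonneg_left h1 (le_of_lt hnR)
      _ = M := by field_simp
    have hsba : |s k₀ * (b - a)| ≤ M * (1 / n) := by
      rw [abs_mul, abs_of_nonneg (by linarith : (0:ℝ) ≤ b - a)]
      apply mul_le_mul hsk hba (by linarith) hM0
    calc |(f b - f a) - s k₀ * (b - a)| ≤ |f b - f a| + |s k₀ * (b - a)| := abs_sub _ _
    _ ≤ M * (1 / n) + M * (1 / n) := add_le_add hfab hsba
    _ = δ := by rw [hδ]; ring
  -- the network
  refine ⟨n + n + 1,
    Fin.append (Fin.append (fun _ : Fin n => (1:ℝ)) fun _ : Fin n => 1) fun _ : Fin 1 => 0,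
    Fin.append (Fin.append (fun k : Fin n => -t k.1) fun k : Fin n => -t (k.1 + 1))
      fun _ : Fin 1 => 1,
    Fin.append (Fin.append (fun k : Fin n => s k.1) fun k : Fin n => -s k.1)
      fun _ : Fin 1 => f 0, ?_⟩
  have hNet : ∀ x : ℝ, (∑ j : Fin (n + n + 1),
      (Fin.append (Fin.append (fun k : Fin n => s k.1) fun k : Fin n => -s k.1)
        fun _ : Fin 1 => f 0) j *
      max 0 ((Fin.append (Fin.append (fun _ : Fin n => (1:ℝ)) fun _ : Fin n => 1)
        fun _ : Fin 1 => 0) j * x +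
      (Fin.append (Fin.append (fun k : Fin n => -t k.1) fun k : Fin n => -t (k.1 + 1))
        fun _ : Fin 1 => 1) j)) = N x := by
    intro x
    rw [Fin.sum_univ_add, Fin.sum_univ_add]
    simp only [Fin.append_left, Fin.append_right, one_mul, zero_mul, zero_add,
      ← sub_eq_add_neg, Fin.sum_univ_one, neg_mul]
    rw [max_eq_right zero_le_one, mul_one, hN]
    rw [Fin.sum_univ_eq_sum_range (fun k => s k * max 0 (x - t k)) n,
      Fin.sum_univ_eq_sum_range (fun k => -(s k * max 0 (x - t (k + 1)))) n]
    simp only [mul_sub, Finset.sum_sub_distrib, Finset.sum_neg_distrib]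
    ring
  simp only [hNet]
  -- integral bound
  have hNcont : Continuous N := by
    apply Continuous.add continuous_const
    apply continuous_finset_sum
    intro k _
    exact continuous_const.mul
      (((continuous_const.max (continuous_id.sub continuous_const))).sub
        (continuous_const.max (continuous_id.sub continuous_const)))
  have hfc : ContinuousOn f (Icc 0 1) := hf.continuousOn
  have hint : IntervalIntegrable (fun x => (f x - N x) ^ 2) MeasureTheory.volume 0 1 := by
    apply ContinuousOn.intervalIntegrable
    rw [Set.uIcc_of_le zero_le_one]
    exact (hfc.sub hNcont.continuousOn).pow 2
  have hle : (∫ x in (0:ℝ)..1, (f x - N x) ^ 2) ≤ δ ^ 2 := by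
    have h1 : (∫ x in (0:ℝ)..1, (f x - N x) ^ 2) ≤ ∫ _x in (0:ℝ)..1, δ ^ 2 := by
      apply intervalIntegral.integral_mono_on zero_le_one hint intervalIntegrable_const
      intro x hx
      have h2 := abs_le.mp (key x hx)
      exact sq_le_sq' (by linarith [h2.1]) h2.2
    simpa using h1
  calc Real.sqrt (∫ x in (0:ℝ)..1, (f x - N x) ^ 2)
      ≤ Real.sqrt (δ ^ 2) := Real.sqrt_le_sqrt hle
  _ = δ := by rw [Real.sqrt_sq hδ0]
  _ < ε := hδε
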